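/- arXiv:1410.3021 — 2 statements merged into one kernel-verified Lean document; each statement's English description precedes it below -/
import Mathlib

section
/- Let H be a hypergraph and let s, C, and r be positive integers. Define the hypergraph T_{H,C,s} with vertex set V(H) and edge set {A ⊆ V(H) : cd_s(H[A]) > (s−1)C}. Then cd_{rs}(H) ≤ r(s−1)C + cd_r(T_{H,C,s}). -/
universe u v

/-- A hypergraph on a vertex type `V`: a collection of subsets of `V`, its edges. -/
structure Hypergraph' (V : Type u) where
  edges : Set (Set V)

namespace Hypergraph'

variable {V : Type u}

/-- The subhypergraph `H[X]` induced by `X ⊆ V`, as a hypergraph on the vertex type `↥X`: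
its edges correspond to the edges of `H` that are contained in `X`. -/
def induce (H : Hypergraph' V) (X : Set V) : Hypergraph' X :=
  ⟨{e : Set X | Subtype.val '' e ∈ H.edges}⟩

/-- A coloring of the vertices is proper if no (nonempty) edge is monochromatic. -/
def IsProper {α : Type v} (H : Hypergraph' V) (c : V → α) : Prop :=
  ∀ e ∈ H.edges, e.Nonempty → ¬ ∃ a, ∀ v ∈ e, c v = a

/-- `H` is `n`-colorable if it admits a proper coloring with `n` colors. -/
def Colorable (H : Hypergraph' V) (n : ℕ) : Prop :=
  ∃ c : V → Fin n, H.IsProper c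

/-- The chromatic number of a hypergraph, valued in `ℕ∞` (`⊤` if no proper coloring exists). -/
noncomputable def chromNum (H : Hypergraph' V) : ℕ∞ :=
  sInf {C : ℕ∞ | ∃ n : ℕ, C = n ∧ H.Colorable n}

/-- The `r`-colorability defect `cd_r(H)`: the minimum number of vertices whose removal
leaves an `r`-colorable induced subhypergraph. -/
noncomputable def cd (H : Hypergraph' V) (r : ℕ) : ℕ∞ :=
  sInf {c : ℕ∞ | ∃ Y : Set V, (H.induce Yᶜ).Colorable r ∧ c = Y.encard}

/-- The Kneser hypergraph `KG^r(H)`: its vertices are the edges of `H`, and its edges are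
the sets of `r` pairwise disjoint edges of `H`. -/
def kneser (H : Hypergraph' V) (r : ℕ) : Hypergraph' H.edges :=
  ⟨{F : Set H.edges | F.encard = r ∧
      F.Pairwise fun e f => Disjoint (e : Set V) (f : Set V)}⟩

end Hypergraph'

/-- The categorical product of a finite family of hypergraphs: a set of vertex tuples is an
edge iff its projection on each coordinate is an edge of the corresponding factor. -/
def hProd {t : ℕ} {W : Fin t → Type u} (H : ∀ i, Hypergraph' (W i)) :
    Hypergraph' (∀ i, W i) :=
  ⟨{e : Set (∀ i, W i) | ∀ i, (fun v => v i) '' e ∈ (H i).edges}⟩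

/-- The categorical product of two hypergraphs. -/
def hProd2 {V : Type u} {V' : Type v} (G : Hypergraph' V) (G' : Hypergraph' V') :
    Hypergraph' (V × V') :=
  ⟨{e : Set (V × V') | Prod.fst '' e ∈ G.edges ∧ Prod.snd '' e ∈ G'.edges}⟩

/- ### Auxiliary lemmas -/

lemma encard_iUnion_fin_le {α : Type*} :
    ∀ (n : ℕ) (f : Fin n → Set α) (b : ℕ∞), (∀ i, (f i).encard ≤ b) →
      (⋃ i, f i).encard ≤ (n : ℕ∞) * b := by
  intro n
  induction n with
  | zero => intro f b _; simp
  | succ n ih =>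
    intro f b hb
    have h1 : (⋃ i, f i) = f 0 ∪ ⋃ i : Fin n, f i.succ := by
      ext x; simp [Set.mem_iUnion, Fin.exists_fin_succ]
    calc (⋃ i, f i).encard ≤ (f 0).encard + (⋃ i : Fin n, f i.succ).encard := by
          rw [h1]; exact Set.encard_union_le _ _
      _ ≤ b + (n : ℕ∞) * b := add_le_add (hb 0) (ih _ _ fun i => hb i.succ)
      _ = ((n + 1 : ℕ) : ℕ∞) * b := by push_cast; ring

open Classical in
/-- Extend a coloring of `↥(Zᶜ)` (for `Z : Set ↥A`) to a total coloring of `V`. -/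
noncomputable def extColor {V : Type u} {A : Set V} (Z : Set ↥A) {s : ℕ} (hs : 0 < s)
    (cs : ↥(Zᶜ) → Fin s) : V → Fin s := fun v =>
  if h : ∃ hA : v ∈ A, (⟨v, hA⟩ : ↥A) ∈ Zᶜ then cs ⟨⟨v, h.choose⟩, h.choose_spec⟩
  else ⟨0, hs⟩

lemma extColor_not_mono {V : Type u} (H : Hypergraph' V) {A : Set V} {Z : Set ↥A} {s : ℕ}
    (hs : 0 < s) {cs : ↥(Zᶜ) → Fin s} (hcs : ((H.induce A).induce Zᶜ).IsProper cs)
    {e : Set V} (he : e ∈ H.edges) (hne : e.Nonempty)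
    (hsub : ∀ v ∈ e, ∃ hA : v ∈ A, (⟨v, hA⟩ : ↥A) ∈ Zᶜ)
    {j : Fin s} (hmono : ∀ v ∈ e, extColor Z hs cs v = j) : False := by
  classical
  set e' : Set ↥(Zᶜ) := {w | ((w : ↥A) : V) ∈ e} with he'
  have himg : Subtype.val '' (Subtype.val '' e') = e := by
    ext x
    constructor
    · rintro ⟨y, ⟨w, hw, rfl⟩, rfl⟩; exact hw
    · intro hx
      obtain ⟨hA, hZ⟩ := hsub x hx
      exact ⟨⟨x, hA⟩, ⟨⟨⟨x, hA⟩, hZ⟩, hx, rfl⟩, rfl⟩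
  have hedge : e' ∈ ((H.induce A).induce Zᶜ).edges := by
    show Subtype.val '' (Subtype.val '' e') ∈ H.edges
    rw [himg]; exact he
  have hne' : e'.Nonempty := by
    obtain ⟨v, hv⟩ := hne
    obtain ⟨hA, hZ⟩ := hsub v hv
    exact ⟨⟨⟨v, hA⟩, hZ⟩, hv⟩
  refine hcs e' hedge hne' ⟨j, fun w hw => ?_⟩
  have hval := hmono ((w : ↥A) : V) hw
  have hcond : ∃ hA : ((w : ↥A) : V) ∈ A, (⟨((w : ↥A) : V), hA⟩ : ↥A) ∈ Zᶜ :=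
    ⟨(w : ↥A).2, w.2⟩
  rw [extColor, dif_pos hcond] at hval
  exact hval

lemma exists_of_cd_le {V : Type u} (H : Hypergraph' V) {n : ℕ} {b : ℕ∞} (hb : b ≠ ⊤)
    (h : H.cd n ≤ b) :
    ∃ Y : Set V, (H.induce Yᶜ).Colorable n ∧ Y.encard ≤ b := by
  rw [Hypergraph'.cd] at h
  have hne : {c : ℕ∞ | ∃ Y : Set V, (H.induce Yᶜ).Colorable n ∧ c = Y.encard}.Nonempty := by
    by_contra hh
    rw [Set.not_nonempty_iff_eq_empty] at hh
    rw [hh, sInf_empty] at h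
    exact hb (top_le_iff.mp h)
  obtain ⟨Y, hY, hcard⟩ := csInf_mem hne
  exact ⟨Y, hY, hcard ▸ h⟩

/-- **Lemma.** For a hypergraph `H` and positive integers `s, C, r`, let `T_{H,C,s}` be the
hypergraph with vertex set `V(H)` and edges `{A ⊆ V(H) : cd_s(H[A]) > (s−1)C}`. Then
`cd_{rs}(H) ≤ r(s−1)C + cd_r(T_{H,C,s})`. -/
theorem cd_mul_le_of_auxiliary {V : Type u} (H : Hypergraph' V) (s C r : ℕ)
    (hs : 0 < s) (hC : 0 < C) (hr : 0 < r) :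
    H.cd (r * s) ≤ ((r * (s - 1) * C : ℕ) : ℕ∞) +
      (Hypergraph'.mk {A : Set V | (((s - 1) * C : ℕ) : ℕ∞) < (H.induce A).cd s}).cd r := by
  classical
  set T : Hypergraph' V :=
    Hypergraph'.mk {A : Set V | (((s - 1) * C : ℕ) : ℕ∞) < (H.induce A).cd s} with hTdef
  rcases eq_or_ne (T.cd r) ⊤ with htop | htne
  · rw [htop, add_top]; exact le_top
  have hSne : {c : ℕ∞ | ∃ Y : Set V, (T.induce Yᶜ).Colorable r ∧ c = Y.encard}.Nonempty := by
    by_contra hh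
    rw [Set.not_nonempty_iff_eq_empty] at hh
    exact htne (by rw [Hypergraph'.cd, hh, sInf_empty])
  obtain ⟨Y, ⟨c, hc⟩, hYcard⟩ := csInf_mem hSne
  have hTY : T.cd r = Y.encard := by rw [Hypergraph'.cd]; exact hYcard
  set A : Fin r → Set V := fun i => Subtype.val '' (c ⁻¹' {i}) with hAdef
  -- each color class has small defect
  have hcd : ∀ i, (H.induce (A i)).cd s ≤ (((s - 1) * C : ℕ) : ℕ∞) := by
    intro i
    by_contra hgt
    push_neg at hgt
    rcases (A i).eq_empty_or_nonempty with hemp | hAne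
    · have hle : (H.induce (A i)).cd s ≤ 0 := by
        rw [Hypergraph'.cd]
        refine sInf_le ⟨∅, ⟨fun _ => ⟨0, hs⟩, ?_⟩, Set.encard_empty.symm⟩
        intro e _ hene _
        obtain ⟨w, _⟩ := hene
        exact absurd (hemp.subset ((w : ↥(A i)) : ↥(A i)).2) (Set.notMem_empty _)
      exact absurd (lt_of_lt_of_le hgt hle) (not_lt.mpr zero_le)
    · have hedge : (c ⁻¹' {i}) ∈ (T.induce Yᶜ).edges := hgt
      have hne' : (c ⁻¹' {i}).Nonempty := by
        obtain ⟨x, w, hw, rfl⟩ := hAne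
        exact ⟨w, hw⟩
      exact hc (c ⁻¹' {i}) hedge hne' ⟨i, fun v hv => hv⟩
  have hZex : ∀ i, ∃ Z : Set ↥(A i),
      ((H.induce (A i)).induce Zᶜ).Colorable s ∧ Z.encard ≤ (((s - 1) * C : ℕ) : ℕ∞) :=
    fun i => exists_of_cd_le _ (WithTop.natCast_ne_top _) (hcd i)
  choose Z hZcol hZcard using hZex
  choose cs hcs using hZcol
  set B : Set V := Y ∪ ⋃ i, Subtype.val '' (Z i) with hBdef
  set ci : V → Fin r := fun v => if h : v ∈ Yᶜ then c ⟨v, h⟩ else ⟨0, hr⟩ with hcidef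
  have hgood : ∀ v, v ∉ B →
      ∃ hA : v ∈ A (ci v), (⟨v, hA⟩ : ↥(A (ci v))) ∈ (Z (ci v))ᶜ := by
    intro v hv
    have hvY : v ∈ Yᶜ := fun h => hv (Set.mem_union_left _ h)
    have h1 : ci v = c ⟨v, hvY⟩ := dif_pos hvY
    have hA' : v ∈ A (ci v) := ⟨⟨v, hvY⟩, h1.symm, rfl⟩
    refine ⟨hA', fun hmem => hv (Set.mem_union_right _ ?_)⟩
    exact Set.mem_iUnion.mpr ⟨ci v, ⟨⟨v, hA'⟩, hmem, rfl⟩⟩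
  set col : ↥Bᶜ → Fin (r * s) :=
    fun v => finProdFinEquiv (ci v.1, extColor (Z (ci v.1)) hs (cs (ci v.1)) v.1) with hcoldef
  have hproper : (H.induce Bᶜ).IsProper col := by
    rintro e heE hene ⟨a, ha⟩
    set p := finProdFinEquiv.symm a with hp
    have hkey : ∀ w ∈ e, ci (w : ↥Bᶜ).1 = p.1 ∧
        extColor (Z p.1) hs (cs p.1) (w : ↥Bᶜ).1 = p.2 := by
      intro w hw
      have h1 := ha w hw
      simp only [hcoldef] at h1
      have h2 : (ci (w : ↥Bᶜ).1,
          extColor (Z (ci (w : ↥Bᶜ).1)) hs (cs (ci (w : ↥Bᶜ).1)) (w : ↥Bᶜ).1) = p :=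
        (Equiv.eq_symm_apply _).mpr h1
      have hi : ci (w : ↥Bᶜ).1 = p.1 := congrArg Prod.fst h2
      have hj := congrArg Prod.snd h2
      rw [hi] at hj
      exact ⟨hi, hj⟩
    have heE' : Subtype.val '' e ∈ H.edges := heE
    have hne' : (Subtype.val '' e).Nonempty := hene.image _
    have hsub' : ∀ v ∈ Subtype.val '' e,
        ∃ hA : v ∈ A p.1, (⟨v, hA⟩ : ↥(A p.1)) ∈ (Z p.1)ᶜ := by
      rintro v ⟨w, hw, rfl⟩
      have hcomb := hgood (w : ↥Bᶜ).1 w.2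
      rw [(hkey w hw).1] at hcomb
      exact hcomb
    have hmono' : ∀ v ∈ Subtype.val '' e, extColor (Z p.1) hs (cs p.1) v = p.2 := by
      rintro v ⟨w, hw, rfl⟩
      exact (hkey w hw).2
    exact extColor_not_mono H hs (hcs p.1) heE' hne' hsub' hmono'
  have hcd_le : H.cd (r * s) ≤ B.encard := by
    rw [Hypergraph'.cd]
    exact sInf_le ⟨B, ⟨col, hproper⟩, rfl⟩
  have hBle : B.encard ≤ ((r * (s - 1) * C : ℕ) : ℕ∞) + Y.encard := by
    calc B.encard ≤ Y.encard + (⋃ i, Subtype.val '' (Z i)).encard :=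
          Set.encard_union_le _ _
      _ ≤ Y.encard + (r : ℕ∞) * (((s - 1) * C : ℕ) : ℕ∞) := by
          refine add_le_add_right ?_ _
          refine encard_iUnion_fin_le _ _ _ fun i => ?_
          rw [Subtype.val_injective.encard_image]
          exact hZcard i
      _ = ((r * (s - 1) * C : ℕ) : ℕ∞) + Y.encard := by push_cast; ring
  rw [hTY]
  exact le_trans hcd_le hBle
end

section
/- For every hypergraph H with finitely many vertices and every integer r ≥ 2, one has |V(H)| − alt_r(H) ≥ cd_r(H). -/
universe u v

/-- The maximum length of an alternating subsequence of the nonzero entries of `x`, where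
`x ∈ (Z_r ∪ {0})^n` is encoded with `none` for `0` and `ZMod r` for the `r`-th roots of
unity (`j ∈ ZMod r` corresponding to `ω^j`). -/
noncomputable def altSeq {r n : ℕ} (x : Fin n → Option (ZMod r)) : ℕ :=
  sSup {k : ℕ | ∃ f : Fin k → Fin n, StrictMono f ∧ (∀ j, x (f j) ≠ none) ∧
    ∀ (j : ℕ) (h : j + 1 < k), x (f ⟨j, Nat.lt_of_succ_lt h⟩) ≠ x (f ⟨j + 1, h⟩)}

/-- The `r`-alternation number `alt_r(H)` of a hypergraph: the minimum, over identifications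
`π` of `Fin n` with the vertex set (`n = |V(H)|`), of the maximum of `altSeq x` over all
vectors `x ∈ (Z_r ∪ {0})^n` none of whose supports `supp_j(x)` contains an edge of `H`. -/
noncomputable def altNum {V : Type u} (r : ℕ) (H : Hypergraph' V) : ℕ :=
  ⨅ π : Fin (Nat.card V) ≃ V,
    sSup {a : ℕ | ∃ x : Fin (Nat.card V) → Option (ZMod r),
      (∀ j : ZMod r, ∀ E ∈ H.edges, ¬ E ⊆ (fun i => π i) '' {i | x i = some j}) ∧
      a = altSeq x}

/-- The set of alternation values of admissible vectors, for a fixed identification `π`. -/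
def altValSet {V : Type u} (H : Hypergraph' V) (r n : ℕ) (π : Fin n ≃ V) : Set ℕ :=
  {a : ℕ | ∃ x : Fin n → Option (ZMod r),
    (∀ j : ZMod r, ∀ E ∈ H.edges, ¬ E ⊆ (fun i => π i) '' {i | x i = some j}) ∧
    a = altSeq x}

lemma altNum_eq_iInf {V : Type u} (H : Hypergraph' V) (r : ℕ) :
    altNum r H = ⨅ π : Fin (Nat.card V) ≃ V, sSup (altValSet H r (Nat.card V) π) := rfl

lemma cd_le_card_aux {V : Type u} [Finite V] (H : Hypergraph' V) (r : ℕ) :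
    H.cd r ≤ ((Nat.card V : ℕ) : ℕ∞) := by
  apply sInf_le
  refine ⟨Set.univ, ⟨fun v => (Set.notMem_empty v.1 (by simpa using v.2)).elim, ?_⟩, ?_⟩
  · intro e he hne
    obtain ⟨v, hv⟩ := hne
    exact (Set.notMem_empty v.1 (by simpa using v.2)).elim
  · rw [Set.encard_univ]
    simp [ENat.card_eq_coe_natCard]

/-- For every hypergraph `H` with finitely many vertices and every `r ≥ 2`,
`|V(H)| − alt_r(H) ≥ cd_r(H)`. -/
theorem cd_le_card_sub_altNum {V : Type u} [Finite V] (H : Hypergraph' V) (r : ℕ)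
    (hr : 2 ≤ r) :
    H.cd r ≤ ((Nat.card V - altNum r H : ℕ) : ℕ∞) := by
  classical
  haveI : NeZero r := ⟨by omega⟩
  set n := Nat.card V with hn
  -- the infimum over the nonempty type of equivalences is attained
  haveI hπne : Nonempty (Fin n ≃ V) := ⟨(Finite.equivFin V).symm⟩
  obtain ⟨π, hπ⟩ : ∃ π : Fin n ≃ V, sSup (altValSet H r n π) = altNum r H := by
    rw [altNum_eq_iInf, iInf]
    exact Nat.sInf_mem (Set.range_nonempty _)
  by_cases hS : (altValSet H r n π).Nonempty
  · -- bound: every alternation value is at most `n`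
    have hbound : ∀ (m : ℕ) (x : Fin n → Option (ZMod r)), (m ∈ {k : ℕ |
        ∃ f : Fin k → Fin n, StrictMono f ∧ (∀ j, x (f j) ≠ none) ∧
        ∀ (j : ℕ) (h : j + 1 < k), x (f ⟨j, Nat.lt_of_succ_lt h⟩) ≠ x (f ⟨j + 1, h⟩)}) →
        m ≤ n := by
      intro m x hm
      obtain ⟨f, hf, -, -⟩ := hm
      simpa using Fintype.card_le_of_injective f hf.injective
    have haltSeq_le : ∀ x : Fin n → Option (ZMod r), altSeq x ≤ n := fun x =>
      csSup_le ⟨0, ⟨Fin.elim0, fun i => i.elim0, fun j => j.elim0, by omega⟩⟩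
        (fun m hm => hbound m x hm)
    have hSbdd : BddAbove (altValSet H r n π) := by
      refine ⟨n, fun m hm => ?_⟩
      obtain ⟨x, -, rfl⟩ := hm
      exact haltSeq_le x
    have hFa : altNum r H ∈ altValSet H r n π := hπ ▸ Nat.sSup_mem hS hSbdd
    obtain ⟨x, hxvalid, hxa⟩ := hFa
    set a := altNum r H with ha
    -- the sSup defining `altSeq x` is attained
    have hamem : a ∈ {k : ℕ | ∃ f : Fin k → Fin n, StrictMono f ∧ (∀ j, x (f j) ≠ none) ∧
        ∀ (j : ℕ) (h : j + 1 < k), x (f ⟨j, Nat.lt_of_succ_lt h⟩) ≠ x (f ⟨j + 1, h⟩)} := by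
      rw [hxa, altSeq]
      exact Nat.sSup_mem ⟨0, ⟨Fin.elim0, fun i => i.elim0, fun j => j.elim0, by omega⟩⟩
        ⟨n, fun m hm => hbound m x hm⟩
    obtain ⟨f, hfmono, hfnone, -⟩ := hamem
    have han : a ≤ n := by
      simpa using Fintype.card_le_of_injective f hfmono.injective
    -- the kept vertices
    set g : Fin a → V := fun j => π (f j) with hg
    have hginj : Function.Injective g := fun i j hij =>
      hfmono.injective (π.injective hij)
    set Y : Set V := (Set.range g)ᶜ with hY
    -- for each nonzero entry, its value in `ZMod r`
    have hval : ∀ j : Fin a, x (f j) = some ((x (f j)).getD 0) := by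
      intro j
      obtain ⟨m, hm⟩ := Option.ne_none_iff_exists'.mp (hfnone j)
      rw [hm]; rfl
    -- the coloring
    set enc : ZMod r → Fin r := fun m => ⟨m.val, ZMod.val_lt m⟩ with henc
    have hencinj : Function.Injective enc := fun m₁ m₂ h =>
      ZMod.val_injective r (congrArg Fin.val h)
    set c : V → Fin r := fun v => if h : ∃ j, g j = v
      then enc ((x (f h.choose)).getD 0) else ⟨0, by omega⟩ with hc
    have hcol : (H.induce Yᶜ).Colorable r := by
      refine ⟨fun v => c v.1, ?_⟩
      intro e he hne hmono
      obtain ⟨a0, hmono⟩ := hmono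
      obtain ⟨v0, hv0⟩ := hne
      -- every vertex of `Yᶜ` is in the range of `g`
      have hrange : ∀ v : ↥(Yᶜ), ∃ j, g j = v.1 := by
        intro v
        have h2 : (v : V) ∈ (Set.range g)ᶜᶜ := v.2
        simpa using h2
      -- the common color value in `ZMod r`
      set m0 : ZMod r := (x (f (hrange v0).choose)).getD 0 with hm0
      have hsubset : Subtype.val '' e ⊆ (fun i => π i) '' {i | x i = some m0} := by
        rintro u ⟨v, hv, rfl⟩
        obtain h := hrange v
        refine ⟨f h.choose, ?_, h.choose_spec⟩
        have h1 : c v.1 = enc ((x (f h.choose)).getD 0) := by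
          rw [hc]
          exact dif_pos h
        have h2 : c v0.1 = enc m0 := by
          rw [hc, hm0]
          exact dif_pos (hrange v0)
        have hcv : c v.1 = a0 := hmono v hv
        have hcv0 : c v0.1 = a0 := hmono v0 hv0
        have h3 : enc ((x (f h.choose)).getD 0) = enc m0 := by
          rw [← h1, ← h2, hcv, hcv0]
        have h4 : (x (f h.choose)).getD 0 = m0 := hencinj h3
        show x (f h.choose) = some m0
        rw [← h4]
        exact hval h.choose
      exact hxvalid m0 (Subtype.val '' e) he hsubset
    -- cardinality computation
    have hrg : (Set.range g).encard = (a : ℕ∞) := by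
      rw [← Set.image_univ, hginj.encard_image _, Set.encard_univ]
      simp [ENat.card_eq_coe_natCard]
    obtain ⟨k, hk⟩ : ∃ k : ℕ, Y.encard = (k : ℕ∞) := by
      have := Set.toFinite Y
      exact ⟨(Set.toFinite Y).toFinset.card, (Set.toFinite Y).encard_eq_coe_toFinset_card⟩
    have hsum : (Set.range g).encard + Y.encard = (Set.univ : Set V).encard :=
      Set.encard_add_encard_compl _
    rw [hrg, hk, Set.encard_univ] at hsum
    have hsum' : a + k = n := by
      have : ((a + k : ℕ) : ℕ∞) = (n : ℕ∞) := by
        push_cast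
        rw [hsum]
        simp [ENat.card_eq_coe_natCard, hn]
      exact_mod_cast this
    have hkval : k = n - a := by omega
    have h1 : H.cd r ≤ Y.encard := sInf_le ⟨Y, hcol, rfl⟩
    rw [hk, hkval] at h1
    exact h1
  · -- no admissible vector at all: then `altNum r H = 0`
    have h0 : altNum r H = 0 := by
      rw [← hπ, Set.not_nonempty_iff_eq_empty.mp hS, csSup_empty]
      rfl
    rw [h0, Nat.sub_zero]
    exact cd_le_card_aux H r
end
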